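/- For every odd integer m ≥ 5, the girth of the generalized Grötzsch graph G_m is 4, i.e., the length of a shortest cycle in G_m is 4. -/

import Mathlib

open SimpleGraph

/-- Vertex type for the graphs on `2m+1` vertices: `Sum.inl i` is the vertex `pᵢ`,
`Sum.inr (Sum.inl i)` is the vertex `qᵢ` (indices taken modulo `m`),
and `Sum.inr (Sum.inr ())` is the apex vertex `a`. -/
abbrev GVert (m : ℕ) := Sum (ZMod m) (Sum (ZMod m) Unit)

/-- The vertex `pᵢ`. -/
def pV {m : ℕ} (i : ZMod m) : GVert m := Sum.inl i

/-- The vertex `qᵢ`. -/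
def qV {m : ℕ} (i : ZMod m) : GVert m := Sum.inr (Sum.inl i)

/-- The apex vertex `a`. -/
def aV (m : ℕ) : GVert m := Sum.inr (Sum.inr ())

/-- The generalized Grötzsch graph `G_m` (intended for odd `m ≥ 5`): edges are
`a qᵢ` for all `i`, `pᵢ pᵢ₊₁` for all `i`, and `pᵢ q_{i + (2k-1)}` for all `i` and
`0 ≤ k ≤ (m-3)/2`, all indices taken modulo `m`. -/
def GenGrotzsch (m : ℕ) : SimpleGraph (GVert m) :=
  SimpleGraph.fromRel (fun u v =>
    (∃ i : ZMod m, u = aV m ∧ v = qV i) ∨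
    (∃ i : ZMod m, u = pV i ∧ v = pV (i + 1)) ∨
    (∃ (i : ZMod m) (k : ℕ), k ≤ (m - 3) / 2 ∧
      u = pV i ∧ v = qV (i + (2 * (k : ZMod m) - 1))))

section helpers
variable {m : ℕ}

lemma adj_aq (i : ZMod m) : (GenGrotzsch m).Adj (aV m) (qV i) := by
  simp [GenGrotzsch, pV, qV, aV]

lemma not_adj_ap (i : ZMod m) : ¬ (GenGrotzsch m).Adj (aV m) (pV i) := by
  simp [GenGrotzsch, pV, qV, aV]

lemma not_adj_qq (i j : ZMod m) : ¬ (GenGrotzsch m).Adj (qV i) (qV j) := by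
  simp [GenGrotzsch, pV, qV, aV]

lemma adj_pp (i j : ZMod m) :
    (GenGrotzsch m).Adj (pV i) (pV j) ↔ i ≠ j ∧ (j = i + 1 ∨ i = j + 1) := by
  simp [GenGrotzsch, pV, qV, aV]

lemma adj_pq (i j : ZMod m) :
    (GenGrotzsch m).Adj (pV i) (qV j) ↔ ∃ k : ℕ, k ≤ (m - 3) / 2 ∧ j = i + (2 * (k : ZMod m) - 1) := by
  constructor
  · intro h
    rw [GenGrotzsch, SimpleGraph.fromRel_adj] at h
    obtain ⟨-, h | h⟩ := h <;>
      simp only [pV, qV, aV, Sum.inl.injEq, Sum.inr.injEq, reduceCtorEq, exists_and_left,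
        false_and, and_false, exists_false, false_or, exists_const] at h
    obtain ⟨i', k, hk, rfl, rfl⟩ := h
    exact ⟨k, hk, rfl⟩
  · rintro ⟨k, hk, rfl⟩
    rw [GenGrotzsch, SimpleGraph.fromRel_adj]
    refine ⟨by simp [pV, qV], Or.inl ?_⟩
    exact Or.inr (Or.inr ⟨i, k, hk, rfl, rfl⟩)

end helpers

lemma zmod_small_ne {m c : ℕ} (hm : 5 ≤ m) (hc1 : 0 < c) (hc2 : c < 5) :
    (c : ZMod m) ≠ 0 := by
  intro h
  rw [ZMod.natCast_eq_zero_iff] at h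
  have := Nat.le_of_dvd hc1 h
  omega

lemma gg_key {m : ℕ} (hm : 5 ≤ m) {k k' : ℕ} (hk : k ≤ (m - 3) / 2) (hk' : k' ≤ (m - 3) / 2)
    (h : 2 * (k : ZMod m) = 2 * (k' : ZMod m) + 1) : False := by
  have h2 : ((2 * k : ℕ) : ZMod m) = ((2 * k' + 1 : ℕ) : ZMod m) := by push_cast; rw [h]
  rw [ZMod.natCast_eq_natCast_iff, Nat.modEq_iff_dvd] at h2
  obtain ⟨c, hc⟩ := h2
  have h0 : ((2 * k' + 1 : ℕ) : ℤ) - (2 * k : ℕ) = 0 := by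
    refine Int.eq_zero_of_dvd_of_natAbs_lt_natAbs ⟨c, hc⟩ ?_
    simp only [Int.natAbs_natCast]
    omega
  omega

lemma no_ppq {m : ℕ} (hm : 5 ≤ m) (i j l : ZMod m)
    (h1 : (GenGrotzsch m).Adj (pV i) (pV j))
    (h2 : (GenGrotzsch m).Adj (pV i) (qV l))
    (h3 : (GenGrotzsch m).Adj (pV j) (qV l)) : False := by
  rw [adj_pp] at h1
  rw [adj_pq] at h2 h3
  obtain ⟨k, hk, rfl⟩ := h2
  obtain ⟨k', hk', he⟩ := h3
  obtain ⟨hne, rfl | rfl⟩ := h1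
  · exact gg_key hm hk hk' (by linear_combination he)
  · exact gg_key hm hk' hk (by linear_combination -he)

lemma gg_triangle_free {m : ℕ} (hm : 5 ≤ m) (x y z : GVert m)
    (h1 : (GenGrotzsch m).Adj x y) (h2 : (GenGrotzsch m).Adj y z)
    (h3 : (GenGrotzsch m).Adj z x) : False := by
  have hsymm := fun {u v : GVert m} (h : (GenGrotzsch m).Adj u v) => h.symm
  rcases x with i | i | ⟨⟩ <;> rcases y with j | j | ⟨⟩ <;> rcases z with l | l | ⟨⟩
  -- rewrite atoms into pV/qV/aV form
  all_goals
    simp only [show ∀ i : ZMod m, (Sum.inl i : GVert m) = pV i from fun _ => rfl,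
      show ∀ i : ZMod m, (Sum.inr (Sum.inl i) : GVert m) = qV i from fun _ => rfl,
      show (Sum.inr (Sum.inr ()) : GVert m) = aV m from rfl] at h1 h2 h3
  -- kill impossible edges
  case inl.inl.inl => -- p p p
    rw [adj_pp] at h1 h2 h3
    obtain ⟨hne1, e1 | e1⟩ := h1 <;> obtain ⟨hne2, e2 | e2⟩ := h2 <;>
      obtain ⟨hne3, e3 | e3⟩ := h3 <;>
    first
      | (exact zmod_small_ne hm (by norm_num) (by norm_num) (c := 3) (by linear_combination e1 + e2 + e3))
      | (exact zmod_small_ne hm (by norm_num) (by norm_num) (c := 3) (by linear_combination -e1 - e2 - e3))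
      | (exact zmod_small_ne hm (by norm_num) (by norm_num) (c := 1) (by linear_combination e1 + e2))
      | (exact zmod_small_ne hm (by norm_num) (by norm_num) (c := 1) (by linear_combination -e1 - e2))
      | (exact zmod_small_ne hm (by norm_num) (by norm_num) (c := 1) (by linear_combination e2 + e3))
      | (exact zmod_small_ne hm (by norm_num) (by norm_num) (c := 1) (by linear_combination -e2 - e3))
      | (exact zmod_small_ne hm (by norm_num) (by norm_num) (c := 1) (by linear_combination e1 + e3))
      | (exact zmod_small_ne hm (by norm_num) (by norm_num) (c := 1) (by linear_combination -e1 - e3))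
      | (exact zmod_small_ne hm (by norm_num) (by norm_num) (c := 1) (by linear_combination e1 + e2 - e3))
      | (exact zmod_small_ne hm (by norm_num) (by norm_num) (c := 1) (by linear_combination -e1 - e2 + e3))
      | (exact zmod_small_ne hm (by norm_num) (by norm_num) (c := 1) (by linear_combination e1 - e2 + e3))
      | (exact zmod_small_ne hm (by norm_num) (by norm_num) (c := 1) (by linear_combination -e1 + e2 - e3))
      | (exact zmod_small_ne hm (by norm_num) (by norm_num) (c := 1) (by linear_combination -e1 + e2 + e3))
      | (exact zmod_small_ne hm (by norm_num) (by norm_num) (c := 1) (by linear_combination e1 - e2 - e3))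
  case inl.inl.inr.inl => exact no_ppq hm i j l h1 (hsymm h3) h2
  case inl.inr.inl.inl => exact no_ppq hm l i j h3 (hsymm h2) h1
  case inr.inl.inl.inl => exact no_ppq hm j l i h2 (hsymm h1) h3
  all_goals
    first
      | exact not_adj_qq _ _ h1 | exact not_adj_qq _ _ h2 | exact not_adj_qq _ _ h3
      | exact not_adj_ap _ h1 | exact not_adj_ap _ (hsymm h1)
      | exact not_adj_ap _ h2 | exact not_adj_ap _ (hsymm h2)
      | exact not_adj_ap _ h3 | exact not_adj_ap _ (hsymm h3)
      | exact (GenGrotzsch m).irrefl h1 | exact (GenGrotzsch m).irrefl h2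
      | exact (GenGrotzsch m).irrefl h3

lemma walk_len3 {V : Type*} {G : SimpleGraph V} {a : V} (w : G.Walk a a) (h : w.length = 3) :
    ∃ b c, G.Adj a b ∧ G.Adj b c ∧ G.Adj c a := by
  match w with
  | .cons h1 (.cons h2 (.cons h3 .nil)) => exact ⟨_, _, h1, h2, h3⟩
  | .nil => simp at h
  | .cons _ .nil => simp at h
  | .cons _ (.cons _ .nil) => simp at h
  | .cons _ (.cons _ (.cons _ (.cons _ w'))) => simp [SimpleGraph.Walk.length_cons] at h

/-- For every odd integer `m ≥ 5`, the girth of the generalized Grötzsch graph `G_m`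
is `4`. -/
theorem genGrotzsch_girth (m : ℕ) (h5 : 5 ≤ m) (hodd : Odd m) :
    (GenGrotzsch m).girth = 4 := by
  have hne2 : (1 : ZMod m) ≠ -1 := by
    intro h
    have : ((2 : ℕ) : ZMod m) = 0 := by push_cast; linear_combination h
    exact zmod_small_ne h5 (by norm_num) (by norm_num) this
  -- the 4-cycle  a — q₁ — p₀ — q₋₁ — a
  have e1 : (GenGrotzsch m).Adj (aV m) (qV (1 : ZMod m)) := adj_aq 1
  have e2 : (GenGrotzsch m).Adj (pV (0 : ZMod m)) (qV (1 : ZMod m)) := by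
    rw [adj_pq]
    exact ⟨1, by omega, by push_cast; ring⟩
  have e3 : (GenGrotzsch m).Adj (pV (0 : ZMod m)) (qV (-1 : ZMod m)) := by
    rw [adj_pq]
    exact ⟨0, by omega, by push_cast; ring⟩
  have e4 : (GenGrotzsch m).Adj (qV (-1 : ZMod m)) (aV m) := (adj_aq (-1)).symm
  let w : (GenGrotzsch m).Walk (aV m) (aV m) :=
    .cons e1 (.cons e2.symm (.cons e3 (.cons e4 .nil)))
  have hwlen : w.length = 4 := rfl
  have hwcyc : w.IsCycle := by
    rw [SimpleGraph.Walk.isCycle_def]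
    refine ⟨?_, by simp [w], ?_⟩
    · rw [SimpleGraph.Walk.isTrail_def]
      simp only [w, SimpleGraph.Walk.edges_cons, SimpleGraph.Walk.edges_nil]
      simp [pV, qV, aV, Sym2.eq, Sym2.rel_iff, hne2, hne2.symm]
    · simp [w, SimpleGraph.Walk.support, pV, qV, aV, hne2, hne2.symm]
  have hub : (GenGrotzsch m).egirth ≤ 4 := by
    rw [SimpleGraph.egirth]
    refine le_trans (iInf_le_of_le (aV m) (iInf_le_of_le w (iInf_le _ hwcyc))) ?_
    rw [hwlen]
    exact_mod_cast le_rfl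
  have hlb : (4 : ℕ∞) ≤ (GenGrotzsch m).egirth := by
    rw [SimpleGraph.le_egirth]
    intro a v hv
    have h3 := hv.three_le_length
    by_contra hlt
    push_neg at hlt
    have hlen : v.length = 3 := by
      have : (v.length : ℕ∞) < (4 : ℕ) := by exact_mod_cast hlt
      rw [Nat.cast_lt] at this
      omega
    obtain ⟨b, c, hab, hbc, hca⟩ := walk_len3 v hlen
    exact gg_triangle_free h5 a b c hab hbc hca
  have : (GenGrotzsch m).egirth = 4 := le_antisymm hub hlb
  rw [SimpleGraph.girth, this]
  rfl
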